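/- Let A be a ring, t a central unit of A, I a type, and ε : I → I → ℤ a function with ε j i = −ε i j for all i, j ∈ I. Let Z : I → Aˣ be a family of units satisfying Z i · Z j = t^{2·ε i j} · Z j · Z i for all i, j ∈ I. For a finite list L = [(i₁,a₁),…,(iₙ,aₙ)] of pairs in I × ℤ define the normalized monomial W(L) := t^{−Σ_{1≤j<k≤n} a_j a_k ε(i_j,i_k)} · (Z i₁)^{a₁} ⋯ (Z iₙ)^{aₙ} ∈ Aˣ, and the weight wt(L) := Σ_{j=1}^{n} a_j · δ_{i_j} ∈ (I →₀ ℤ), where δ_i denotes the standard basis element at i. Then: (a) whenever two lists L, L′ satisfy wt(L) = wt(L′), one has W(L) = W(L′), so W induces a well-defined map v ↦ Z_v on the free ℤ-module I →₀ ℤ; and (b) for all lists L, L′, W(L)·W(L′) = t^{B(wt L, wt L′)} · W(L ++ L′), where B is the unique ℤ-bilinear form on I →₀ ℤ with B(δ_i, δ_j) = ε i j; consequently Z_v · Z_w = t^{B(v,w)} · Z_{v+w} for all v, w ∈ I →₀ ℤ. -/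

import Mathlib

/-- The exponent `Σ_{1 ≤ j < k ≤ n} a_j a_k ε(i_j, i_k)` attached to a list
`L = [(i₁,a₁),…,(iₙ,aₙ)]` of pairs in `I × ℤ`. -/
def pairSum {I : Type*} (ε : I → I → ℤ) : List (I × ℤ) → ℤ
  | [] => 0
  | p :: L => (L.map fun q => p.2 * q.2 * ε p.1 q.1).sum + pairSum ε L

/-- The weight `wt(L) = Σ_j a_j · δ_{i_j} ∈ (I →₀ ℤ)` of a list `L`. -/
noncomputable def wtList {I : Type*} : List (I × ℤ) → (I →₀ ℤ)
  | [] => 0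
  | p :: L => Finsupp.single p.1 p.2 + wtList L

/-- The normalized (Weyl-ordered) monomial
`W(L) = t^(−Σ_{j<k} a_j a_k ε(i_j,i_k)) · (Z i₁)^{a₁} ⋯ (Z iₙ)^{aₙ} ∈ Aˣ`. -/
def Wmon {I A : Type*} [Ring A] (t : Aˣ) (ε : I → I → ℤ) (Z : I → Aˣ)
    (L : List (I × ℤ)) : Aˣ :=
  t ^ (-(pairSum ε L)) * (L.map fun p => Z p.1 ^ p.2).prod

private lemma qcomm {G : Type*} [Group G] {c x y : G} (hc : ∀ u : G, Commute c u)
    (h : x * y = c * y * x) : ∀ a : ℤ, x ^ a * y = c ^ a * y * x ^ a := by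
  intro a
  induction a using Int.induction_on with
  | zero => simp
  | succ n ih =>
    have hx : x ^ ((n : ℤ) + 1) = x ^ (n : ℤ) * x := by rw [zpow_add_one]
    have hcx : c * x ^ (n : ℤ) = x ^ (n : ℤ) * c := (hc _).eq
    calc x ^ ((n:ℤ)+1) * y = x ^ (n:ℤ) * (x * y) := by rw [hx, mul_assoc]
      _ = x ^ (n:ℤ) * (c * (y * x)) := by rw [h, mul_assoc]
      _ = c * (x ^ (n:ℤ) * y) * x := by simp only [← mul_assoc]; rw [← hcx]
      _ = c * (c ^ (n:ℤ) * y * x ^ (n:ℤ)) * x := by rw [ih]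
      _ = c ^ ((n:ℤ)+1) * y * x ^ ((n:ℤ)+1) := by
          rw [zpow_add_one c, zpow_add_one x]
          simp only [← mul_assoc]; rw [(hc (c ^ (n:ℤ))).eq]
  | pred n ih =>
    have h' : x⁻¹ * y = c⁻¹ * y * x⁻¹ := by
      have hyx : y * x = c⁻¹ * (x * y) := by rw [h]; group
      calc x⁻¹ * y = x⁻¹ * (y * x) * x⁻¹ := by group
        _ = x⁻¹ * (c⁻¹ * (x * y)) * x⁻¹ := by rw [hyx]
        _ = c⁻¹ * y * x⁻¹ := by
            simp only [← mul_assoc]; rw [← ((hc x⁻¹).inv_left.eq)]; group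
    have hx : x ^ (-(n : ℤ) - 1) = x ^ (-(n : ℤ)) * x⁻¹ := by
      rw [← zpow_neg_one, ← zpow_add, sub_eq_add_neg]
    calc x ^ (-(n:ℤ)-1) * y = x ^ (-(n:ℤ)) * (x⁻¹ * y) := by rw [hx, mul_assoc]
      _ = x ^ (-(n:ℤ)) * (c⁻¹ * (y * x⁻¹)) := by rw [h', mul_assoc]
      _ = c⁻¹ * (x ^ (-(n:ℤ)) * y) * x⁻¹ := by
          simp only [← mul_assoc]; rw [← ((hc (x ^ (-(n:ℤ)))).inv_left.eq)]
      _ = c⁻¹ * (c ^ (-(n:ℤ)) * y * x ^ (-(n:ℤ))) * x⁻¹ := by rw [ih]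
      _ = c ^ (-(n:ℤ)-1) * y * x ^ (-(n:ℤ)-1) := by
          rw [hx, sub_eq_add_neg, zpow_add, zpow_neg_one]
          simp only [← mul_assoc]; rw [((hc (c ^ (-(n:ℤ)))).inv_left.eq)]

private lemma qcomm2 {G : Type*} [Group G] {c x y : G} (hc : ∀ u : G, Commute c u)
    (h : x * y = c * y * x) (a b : ℤ) : x ^ a * y ^ b = c ^ (a * b) * (y ^ b * x ^ a) := by
  have h1 := qcomm hc h a
  have key : c ^ (-a) * (x ^ a * y) = y * x ^ a := by
    rw [h1]; simp only [← mul_assoc]; rw [← zpow_add]; simp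
  have h2 : y * x ^ a = c ^ (-a) * x ^ a * y := by rw [← key]; group
  have hc' : ∀ u : G, Commute (c ^ (-a)) u := fun u => (hc u).zpow_left _
  have h3 := qcomm hc' h2 b
  have : x ^ a * y ^ b = c ^ (a * b) * (y ^ b * x ^ a) ↔
      c ^ (-(a*b)) * (x ^ a * y ^ b) = y ^ b * x ^ a := by
    constructor
    · intro hh; rw [hh]; simp only [← mul_assoc, ← zpow_add]; simp
    · intro hh; rw [← hh]; simp only [← mul_assoc, ← zpow_add]; simp
  rw [this, h3, ← zpow_mul, neg_mul]
  simp only [← mul_assoc]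
section stmt2aux
variable {I : Type*} {A : Type*} [Ring A]

def crossSum (ε : I → I → ℤ) (L L' : List (I × ℤ)) : ℤ :=
  (L.map fun p => (L'.map fun q => p.2 * q.2 * ε p.1 q.1).sum).sum

lemma pairSum_append (ε : I → I → ℤ) (L L' : List (I × ℤ)) :
    pairSum ε (L ++ L') = pairSum ε L + crossSum ε L L' + pairSum ε L' := by
  induction L with
  | nil => simp [pairSum, crossSum]
  | cons p L ih =>
    show (List.map _ (L ++ L')).sum + pairSum ε (L ++ L') = _
    simp only [List.map_append, List.sum_append, crossSum, List.map_cons, List.sum_cons, pairSum] at *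
    rw [ih]; ring

lemma wtList_append {L L' : List (I × ℤ)} :
    wtList (L ++ L') = wtList L + wtList L' := by
  induction L with
  | nil => simp [wtList]
  | cons p L ih =>
    show Finsupp.single p.1 p.2 + wtList (L ++ L') = _
    rw [ih, wtList, add_assoc]

lemma wtList_eq_sum (L : List (I × ℤ)) :
    wtList L = (L.map fun p => Finsupp.single p.1 p.2).sum := by
  induction L with
  | nil => rfl
  | cons p L ih => simp [wtList, ih]

lemma wtList_perm {L L' : List (I × ℤ)} (h : L.Perm L') : wtList L = wtList L' := by
  rw [wtList_eq_sum, wtList_eq_sum]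
  exact (h.map _).sum_eq

end stmt2aux
section Bsec
variable {I : Type*} (B : (I →₀ ℤ) → (I →₀ ℤ) → ℤ) (ε : I → I → ℤ)
  (hBl : ∀ v₁ v₂ w, B (v₁ + v₂) w = B v₁ w + B v₂ w)
  (hBr : ∀ v w₁ w₂, B v (w₁ + w₂) = B v w₁ + B v w₂)
  (hBε : ∀ i j : I, B (Finsupp.single i 1) (Finsupp.single j 1) = ε i j)

include hBl in
lemma B_zero_left (w) : B 0 w = 0 := by have h := hBl 0 0 w; rw [add_zero] at h; omega

include hBl in
lemma B_neg_left (v w) : B (-v) w = - B v w := by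
  have h := hBl v (-v) w; rw [add_neg_cancel, B_zero_left B hBl] at h; omega

include hBl in
lemma B_single_left (a : ℤ) (i : I) (w) :
    B (Finsupp.single i a) w = a * B (Finsupp.single i 1) w := by
  induction a using Int.induction_on with
  | zero => simpa using B_zero_left B hBl w
  | succ n ih =>
    have : Finsupp.single i ((n : ℤ) + 1) = Finsupp.single i (n : ℤ) + Finsupp.single i 1 :=
      Finsupp.single_add i _ _
    rw [this, hBl, ih]; ring
  | pred n ih =>
    have : Finsupp.single i (-(n : ℤ) - 1)
        = Finsupp.single i (-(n : ℤ)) + (- Finsupp.single i 1) := by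
      rw [← Finsupp.single_neg, ← Finsupp.single_add]; ring_nf
    rw [this, hBl, ih, B_neg_left B hBl]; ring

include hBr in
lemma B_zero_right (v) : B v 0 = 0 := by have h := hBr v 0 0; rw [add_zero] at h; omega

include hBr in
lemma B_neg_right (v w) : B v (-w) = - B v w := by
  have h := hBr v w (-w); rw [add_neg_cancel, B_zero_right B hBr] at h; omega

include hBr in
lemma B_single_right (b : ℤ) (j : I) (v) :
    B v (Finsupp.single j b) = b * B v (Finsupp.single j 1) := by
  induction b using Int.induction_on with
  | zero => simpa using B_zero_right B hBr v
  | succ n ih =>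
    have : Finsupp.single j ((n : ℤ) + 1) = Finsupp.single j (n : ℤ) + Finsupp.single j 1 :=
      Finsupp.single_add j _ _
    rw [this, hBr, ih]; ring
  | pred n ih =>
    have : Finsupp.single j (-(n : ℤ) - 1)
        = Finsupp.single j (-(n : ℤ)) + (- Finsupp.single j 1) := by
      rw [← Finsupp.single_neg, ← Finsupp.single_add]; ring_nf
    rw [this, hBr, ih, B_neg_right B hBr]; ring

include hBl hBr hBε in
lemma B_single_single (i j : I) (a b : ℤ) :
    B (Finsupp.single i a) (Finsupp.single j b) = a * b * ε i j := by
  rw [B_single_left B hBl, B_single_right B hBr, hBε]; ring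
end Bsec

section Wsec
variable {I : Type*} {A : Type*} [Ring A] (t : Aˣ) (ε : I → I → ℤ) (Z : I → Aˣ)
  (ht : ∀ a : A, (t : A) * a = a * (t : A))

include ht in
lemma tcomm : ∀ u : Aˣ, Commute t u := fun u => Units.ext (ht u)

include ht in
lemma tzcomm : ∀ (n : ℤ) (u : Aˣ), t ^ n * u = u * t ^ n :=
  fun n u => ((tcomm t ht u).zpow_left n).eq

lemma Wmon_nil : Wmon t ε Z [] = 1 := by simp [Wmon, pairSum]

lemma Wmon_single (p : I × ℤ) : Wmon t ε Z [p] = Z p.1 ^ p.2 := by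
  simp [Wmon, pairSum]

include ht in
lemma Wmon_append (L L' : List (I × ℤ)) :
    Wmon t ε Z (L ++ L') = t ^ (-(crossSum ε L L')) * (Wmon t ε Z L * Wmon t ε Z L') := by
  unfold Wmon
  rw [pairSum_append, List.map_append, List.prod_append]
  set P := (L.map fun p => Z p.1 ^ p.2).prod with hP
  set P' := (L'.map fun p => Z p.1 ^ p.2).prod with hP'
  have h1 : P * (t ^ (-(pairSum ε L')) * P') = t ^ (-(pairSum ε L')) * (P * P') := by
    rw [← mul_assoc, ← tzcomm t ht, mul_assoc]
  calc t ^ (-(pairSum ε L + crossSum ε L L' + pairSum ε L')) * (P * P')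
      = t ^ (-(crossSum ε L L')) * (t ^ (-(pairSum ε L)) * (t ^ (-(pairSum ε L')) * (P * P'))) := by
        rw [show -(pairSum ε L + crossSum ε L L' + pairSum ε L')
            = -(crossSum ε L L') + (-(pairSum ε L) + -(pairSum ε L')) by ring,
          zpow_add, zpow_add, mul_assoc, mul_assoc]
    _ = t ^ (-(crossSum ε L L')) * (t ^ (-(pairSum ε L)) * P * (t ^ (-(pairSum ε L')) * P')) := by
        simp only [mul_assoc, h1]

include ht in
lemma Wmon_cons (p : I × ℤ) (L : List (I × ℤ)) :
    Wmon t ε Z (p :: L) = t ^ (-(crossSum ε [p] L)) * (Z p.1 ^ p.2 * Wmon t ε Z L) := by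
  have h := Wmon_append t ε Z ht [p] L
  simpa [Wmon_single] using h
end Wsec

section Wsec2
variable {I : Type*} {A : Type*} [Ring A] (t : Aˣ) (ε : I → I → ℤ) (Z : I → Aˣ)
  (B : (I →₀ ℤ) → (I →₀ ℤ) → ℤ)
  (ht : ∀ a : A, (t : A) * a = a * (t : A))
  (hskew : ∀ i j : I, ε j i = - ε i j)
  (hZ : ∀ i j : I, (Z i : A) * (Z j : A)
      = ((t ^ (2 * ε i j) : Aˣ) : A) * (Z j : A) * (Z i : A))
  (hBl : ∀ v₁ v₂ w, B (v₁ + v₂) w = B v₁ w + B v₂ w)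
  (hBr : ∀ v w₁ w₂, B v (w₁ + w₂) = B v w₁ + B v w₂)
  (hBε : ∀ i j : I, B (Finsupp.single i 1) (Finsupp.single j 1) = ε i j)

lemma crossSum_singleton (p : I × ℤ) (L : List (I × ℤ)) :
    crossSum ε [p] L = (L.map fun q => p.2 * q.2 * ε p.1 q.1).sum := by
  simp [crossSum]

include hBl hBr hBε in
lemma B_single_wt (i : I) (a : ℤ) (L : List (I × ℤ)) :
    B (Finsupp.single i a) (wtList L) = (L.map fun q => a * q.2 * ε i q.1).sum := by
  induction L with
  | nil => rw [wtList]; simp [B_zero_right B hBr]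
  | cons q L ih =>
    rw [wtList, hBr, ih, B_single_single B ε hBl hBr hBε]
    simp

include hBl hBr hBε in
lemma B_wt_cross (L L' : List (I × ℤ)) :
    B (wtList L) (wtList L') = crossSum ε L L' := by
  induction L with
  | nil => rw [wtList]; simp [crossSum, B_zero_left B hBl]
  | cons p L ih =>
    rw [wtList, hBl, ih, B_single_wt ε B hBl hBr hBε]
    simp [crossSum]

include ht hZ in
lemma hZU (i j : I) : Z i * Z j = t ^ (2 * ε i j) * Z j * Z i :=
  Units.ext (hZ i j)

include ht hZ in
lemma Zpow_comm (i j : I) (a b : ℤ) :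
    Z i ^ a * Z j ^ b = t ^ (2 * ε i j * (a * b)) * (Z j ^ b * Z i ^ a) := by
  have hc : ∀ u : Aˣ, Commute (t ^ (2 * ε i j)) u := fun u => (tcomm t ht u).zpow_left _
  have h := qcomm2 hc (hZU t ε Z ht hZ i j) a b
  rw [h, ← zpow_mul]

include ht hskew hZ in
lemma Wmon_pair_swap (p q : I × ℤ) : Wmon t ε Z [p, q] = Wmon t ε Z [q, p] := by
  simp only [Wmon, pairSum, List.map_cons, List.map_nil, List.sum_cons, List.sum_nil,
    List.prod_cons, List.prod_nil, mul_one, add_zero]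
  rw [Zpow_comm t ε Z ht hZ, ← mul_assoc, ← zpow_add]
  congr 2
  rw [hskew p.1 q.1]
  ring

include ht hskew hZ in
lemma Wmon_swap (p q : I × ℤ) (L : List (I × ℤ)) :
    Wmon t ε Z (p :: q :: L) = Wmon t ε Z (q :: p :: L) := by
  have h1 : Wmon t ε Z ([p, q] ++ L)
      = t ^ (-(crossSum ε [p, q] L)) * (Wmon t ε Z [p, q] * Wmon t ε Z L) :=
    Wmon_append t ε Z ht [p, q] L
  have h2 : Wmon t ε Z ([q, p] ++ L)
      = t ^ (-(crossSum ε [q, p] L)) * (Wmon t ε Z [q, p] * Wmon t ε Z L) :=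
    Wmon_append t ε Z ht [q, p] L
  have hc : crossSum ε [p, q] L = crossSum ε [q, p] L := by simp [crossSum]; ring
  have := Wmon_pair_swap t ε Z ht hskew hZ p q
  simp only [List.cons_append, List.nil_append] at h1 h2
  rw [h1, h2, hc, this]

include ht hskew hZ in
lemma Wmon_perm {L L' : List (I × ℤ)} (h : L.Perm L') : Wmon t ε Z L = Wmon t ε Z L' := by
  induction h with
  | nil => rfl
  | cons p h ih =>
    rw [Wmon_cons t ε Z ht, Wmon_cons t ε Z ht, ih,
      crossSum_singleton, crossSum_singleton, (h.map _).sum_eq]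
  | swap p q L => exact Wmon_swap t ε Z ht hskew hZ q p L
  | trans _ _ ih1 ih2 => exact ih1.trans ih2
end Wsec2

section Wsec3
variable {I : Type*} {A : Type*} [Ring A] (t : Aˣ) (ε : I → I → ℤ) (Z : I → Aˣ)
  (B : (I →₀ ℤ) → (I →₀ ℤ) → ℤ)
  (ht : ∀ a : A, (t : A) * a = a * (t : A))
  (hskew : ∀ i j : I, ε j i = - ε i j)
  (hZ : ∀ i j : I, (Z i : A) * (Z j : A)
      = ((t ^ (2 * ε i j) : Aˣ) : A) * (Z j : A) * (Z i : A))
  (hBl : ∀ v₁ v₂ w, B (v₁ + v₂) w = B v₁ w + B v₂ w)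
  (hBr : ∀ v w₁ w₂, B v (w₁ + w₂) = B v w₁ + B v w₂)
  (hBε : ∀ i j : I, B (Finsupp.single i 1) (Finsupp.single j 1) = ε i j)

include hskew in
lemma eps_self (i : I) : ε i i = 0 := by have := hskew i i; omega

include ht hskew hBl hBr hBε in
lemma Wmon_merge (i : I) (a b : ℤ) (L : List (I × ℤ)) :
    Wmon t ε Z ((i, a) :: (i, b) :: L) = Wmon t ε Z ((i, a + b) :: L) := by
  rw [Wmon_cons t ε Z ht, Wmon_cons t ε Z ht, Wmon_cons t ε Z ht]
  have hc1 : crossSum ε [(i, a)] ((i, b) :: L)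
      = B (Finsupp.single i a) (Finsupp.single i b + wtList L) := by
    rw [← B_wt_cross ε B hBl hBr hBε]
    rw [show wtList [(i,a)] = Finsupp.single i a + 0 from rfl,
      show wtList ((i,b) :: L) = Finsupp.single i b + wtList L from rfl, add_zero]
  have hc2 : crossSum ε [(i, b)] L = B (Finsupp.single i b) (wtList L) := by
    rw [← B_wt_cross ε B hBl hBr hBε,
      show wtList [(i,b)] = Finsupp.single i b + 0 from rfl, add_zero]
  have hc3 : crossSum ε [(i, a + b)] L = B (Finsupp.single i (a + b)) (wtList L) := by
    rw [← B_wt_cross ε B hBl hBr hBε,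
      show wtList [(i,a+b)] = Finsupp.single i (a+b) + 0 from rfl, add_zero]
  have hsum : crossSum ε [(i, a)] ((i, b) :: L) + crossSum ε [(i, b)] L
      = crossSum ε [(i, a + b)] L := by
    rw [hc1, hc2, hc3, hBr, B_single_single B ε hBl hBr hBε, eps_self ε hskew,
      Finsupp.single_add, hBl]
    ring
  -- now the unit algebra
  have hmove : (Z i ^ a : Aˣ) * (t ^ (-(crossSum ε [(i, b)] L)) * (Z i ^ b * Wmon t ε Z L))
      = t ^ (-(crossSum ε [(i, b)] L)) * (Z i ^ (a + b) * Wmon t ε Z L) := by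
    rw [← mul_assoc, ← tzcomm t ht, mul_assoc, ← mul_assoc (Z i ^ a), ← zpow_add]
  rw [hmove, ← mul_assoc, ← zpow_add, ← hsum]
  congr 1
  ring

include ht in
lemma Wmon_dropzero (i : I) (L : List (I × ℤ)) :
    Wmon t ε Z ((i, 0) :: L) = Wmon t ε Z L := by
  rw [Wmon_cons t ε Z ht]
  simp [crossSum]
end Wsec3

noncomputable def canonL {I : Type*} (v : I →₀ ℤ) : List (I × ℤ) :=
  v.support.toList.map fun i => (i, v i)

section canon
variable {I : Type*} [DecidableEq I]

lemma wt_canon (v : I →₀ ℤ) : wtList (canonL v) = v := by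
  rw [wtList_eq_sum, canonL, List.map_map]
  have h : ((fun p : I × ℤ => Finsupp.single p.1 p.2) ∘ fun i => (i, v i))
      = fun i => Finsupp.single i (v i) := rfl
  rw [h, Finset.sum_map_toList]
  exact Finsupp.sum_single v

lemma canonL_length (v : I →₀ ℤ) : (canonL v).length = v.support.card := by
  simp [canonL, Finset.length_toList]

lemma wt_support_card (L : List (I × ℤ)) : (wtList L).support.card ≤ L.length := by
  induction L with
  | nil => simp [wtList]
  | cons p L ih =>
    rw [wtList]
    have h1 := Finset.card_le_card
      (Finsupp.support_add (g₁ := Finsupp.single p.1 p.2) (g₂ := wtList L))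
    have h2 := Finset.card_union_le (Finsupp.single p.1 p.2).support (wtList L).support
    have h3 := Finset.card_le_card (Finsupp.support_single_subset (a := p.1) (b := p.2))
    simp only [Finset.card_singleton] at h3
    simp only [List.length_cons]
    omega

lemma canon_mem_perm (v : I →₀ ℤ) (i : I) (h : i ∈ v.support) :
    (canonL v).Perm ((i, v i) :: canonL (v.erase i)) := by
  have h2 := Finset.toList_insert (Finset.notMem_erase i v.support)
  rw [Finset.insert_erase h] at h2
  have h3 := h2.map (fun j => (j, v j))
  have h4 : (v.support.erase i).toList.map (fun j => (j, v j)) = canonL (v.erase i) := by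
    rw [canonL, Finsupp.support_erase]
    apply List.map_congr_left
    intro j hj
    have hne : j ≠ i := Finset.ne_of_mem_erase (Finset.mem_toList.mp hj)
    rw [Finsupp.erase_ne hne]
  rw [canonL, ← h4]
  exact h3

lemma canon_notmem_perm (v : I →₀ ℤ) (i : I) (a : ℤ) (ha : a ≠ 0) (hi : i ∉ v.support) :
    (canonL (Finsupp.single i a + v)).Perm ((i, a) :: canonL v) := by
  set w := Finsupp.single i a + v with hw
  have hsup : w.support = insert i v.support := by
    rw [hw, Finsupp.support_add_eq, Finsupp.support_single_ne_zero i ha,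
      ← Finset.insert_eq]
    rw [Finsupp.support_single_ne_zero i ha]
    simp [Finset.disjoint_singleton_left, hi]
  have hvi : v i = 0 := Finsupp.notMem_support_iff.mp hi
  have hwi : w i = a := by
    rw [hw, Finsupp.add_apply, Finsupp.single_eq_same, hvi, add_zero]
  have h2 := Finset.toList_insert hi
  have h3 := h2.map (fun j => (j, w j))
  have h4 : v.support.toList.map (fun j => (j, w j)) = canonL v := by
    rw [canonL]
    apply List.map_congr_left
    intro j hj
    have hne : i ≠ j := by
      intro hij; exact hi (hij ▸ Finset.mem_toList.mp hj)
    rw [hw, Finsupp.add_apply, Finsupp.single_eq_of_ne' hne, zero_add]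
  have h5 : (canonL w).Perm ((i, w i) :: v.support.toList.map (fun j => (j, w j))) := by
    rw [canonL, hsup]
    exact h3
  rw [hwi, h4] at h5
  exact h5
end canon

section NF
variable {I : Type*} [DecidableEq I] {A : Type*} [Ring A] (t : Aˣ) (ε : I → I → ℤ)
  (Z : I → Aˣ) (B : (I →₀ ℤ) → (I →₀ ℤ) → ℤ)
  (ht : ∀ a : A, (t : A) * a = a * (t : A))
  (hskew : ∀ i j : I, ε j i = - ε i j)
  (hZ : ∀ i j : I, (Z i : A) * (Z j : A)
      = ((t ^ (2 * ε i j) : Aˣ) : A) * (Z j : A) * (Z i : A))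
  (hBl : ∀ v₁ v₂ w, B (v₁ + v₂) w = B v₁ w + B v₂ w)
  (hBr : ∀ v w₁ w₂, B v (w₁ + w₂) = B v w₁ + B v w₂)
  (hBε : ∀ i j : I, B (Finsupp.single i 1) (Finsupp.single j 1) = ε i j)

include ht hBl hBr hBε in
lemma Wmon_cons_congr (p : I × ℤ) {M M' : List (I × ℤ)} (hw : wtList M = wtList M')
    (hW : Wmon t ε Z M = Wmon t ε Z M') : Wmon t ε Z (p :: M) = Wmon t ε Z (p :: M') := by
  rw [Wmon_cons t ε Z ht, Wmon_cons t ε Z ht, hW]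
  have hc : crossSum ε [p] M = crossSum ε [p] M' := by
    rw [← B_wt_cross ε B hBl hBr hBε, ← B_wt_cross ε B hBl hBr hBε, hw]
  rw [hc]

lemma canonL_zero : canonL (0 : I →₀ ℤ) = [] := by simp [canonL]

include ht hskew hZ hBl hBr hBε in
lemma Wmon_NF : ∀ n (L : List (I × ℤ)), L.length ≤ n →
    Wmon t ε Z L = Wmon t ε Z (canonL (wtList L)) := by
  intro n
  induction n with
  | zero =>
    intro L hL
    rw [List.eq_nil_of_length_eq_zero (Nat.le_zero.mp hL)]
    rw [show wtList ([] : List (I × ℤ)) = 0 from rfl, canonL_zero]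
  | succ n ih =>
    intro L hL
    match L with
    | [] => rw [show wtList ([] : List (I × ℤ)) = 0 from rfl, canonL_zero]
    | (i, a) :: M =>
      have hM : M.length ≤ n := by
        simp only [List.length_cons] at hL; omega
      have hv : wtList (canonL (wtList M)) = wtList M := wt_canon (wtList M)
      have e1 : Wmon t ε Z ((i, a) :: M) = Wmon t ε Z ((i, a) :: canonL (wtList M)) :=
        Wmon_cons_congr t ε Z B ht hBl hBr hBε _ hv.symm (ih M hM)
      have hwcons : wtList ((i, a) :: M) = Finsupp.single i a + wtList M := rfl
      by_cases ha : a = 0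
      · subst ha
        rw [Wmon_dropzero t ε Z ht, ih M hM, hwcons]
        rw [Finsupp.single_zero, zero_add]
      · by_cases hi : i ∈ (wtList M).support
        · set v := wtList M with hvdef
          have hperm := canon_mem_perm v i hi
          have e2 : Wmon t ε Z ((i, a) :: canonL v)
              = Wmon t ε Z ((i, a) :: (i, v i) :: canonL (v.erase i)) :=
            Wmon_cons_congr t ε Z B ht hBl hBr hBε _ (wtList_perm hperm)
              (Wmon_perm t ε Z ht hskew hZ hperm)
          have e3 : Wmon t ε Z ((i, a) :: (i, v i) :: canonL (v.erase i))
              = Wmon t ε Z ((i, a + v i) :: canonL (v.erase i)) :=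
            Wmon_merge t ε Z B ht hskew hBl hBr hBε i a (v i) _
          have hlen : ((i, a + v i) :: canonL (v.erase i)).length ≤ n := by
            rw [List.length_cons, canonL_length, Finsupp.support_erase,
              Finset.card_erase_of_mem hi]
            have hcard := wt_support_card M
            have hpos : 0 < v.support.card := Finset.card_pos.mpr ⟨i, hi⟩
            rw [← hvdef] at hcard
            omega
          have e4 := ih _ hlen
          have hw2 : wtList ((i, a + v i) :: canonL (v.erase i)) = wtList ((i, a) :: M) := by
            rw [show wtList ((i, a + v i) :: canonL (v.erase i))
                = Finsupp.single i (a + v i) + wtList (canonL (v.erase i)) from rfl,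
              wt_canon, Finsupp.single_add, add_assoc, Finsupp.single_add_erase, hwcons]
          rw [e1, e2, e3, e4, hw2]
        · set v := wtList M with hvdef
          have hperm := canon_notmem_perm v i a ha hi
          rw [e1, hwcons]
          exact ((Wmon_perm t ε Z ht hskew hZ hperm).trans rfl).symm
end NF

/-- If `Z i · Z j = t^(2 ε i j) · Z j · Z i` for a skew-symmetric `ε`, then
(a) `W(L)` depends only on the weight `wt(L)`, so `W` induces a well-defined map
`v ↦ Z_v` on `I →₀ ℤ`; and (b) `W(L)·W(L') = t^(B(wt L, wt L')) · W(L ++ L')`, where `B` is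
the unique ℤ-bilinear form with `B(δ_i, δ_j) = ε i j`; since `wt (L ++ L') = wt L + wt L'`,
consequently `Z_v · Z_w = t^(B(v,w)) · Z_(v+w)`. -/
theorem stmt2 {I : Type*} {A : Type*} [Ring A] (t : Aˣ)
    (ht : ∀ a : A, (t : A) * a = a * (t : A))
    (ε : I → I → ℤ) (hskew : ∀ i j : I, ε j i = - ε i j)
    (Z : I → Aˣ)
    (hZ : ∀ i j : I, (Z i : A) * (Z j : A)
      = ((t ^ (2 * ε i j) : Aˣ) : A) * (Z j : A) * (Z i : A))
    (B : (I →₀ ℤ) → (I →₀ ℤ) → ℤ)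
    (hBadd_left : ∀ v₁ v₂ w, B (v₁ + v₂) w = B v₁ w + B v₂ w)
    (hBadd_right : ∀ v w₁ w₂, B v (w₁ + w₂) = B v w₁ + B v w₂)
    (hBε : ∀ i j : I, B (Finsupp.single i 1) (Finsupp.single j 1) = ε i j) :
    (∀ L L' : List (I × ℤ), wtList L = wtList L' → Wmon t ε Z L = Wmon t ε Z L') ∧
    (∀ L L' : List (I × ℤ),
      Wmon t ε Z L * Wmon t ε Z L'
        = t ^ (B (wtList L) (wtList L')) * Wmon t ε Z (L ++ L')) ∧
    (∀ L L' : List (I × ℤ), wtList (L ++ L') = wtList L + wtList L') := by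
  classical
  refine ⟨?_, ?_, ?_⟩
  · intro L L' h
    rw [Wmon_NF t ε Z B ht hskew hZ hBadd_left hBadd_right hBε L.length L le_rfl, h,
      ← Wmon_NF t ε Z B ht hskew hZ hBadd_left hBadd_right hBε L'.length L' le_rfl]
  · intro L L'
    rw [Wmon_append t ε Z ht, B_wt_cross ε B hBadd_left hBadd_right hBε,
      ← mul_assoc, ← zpow_add]
    simp
  · intro L L'
    exact wtList_append
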